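/- ∫₀^∞ z · csch(πz/2) · log(cosh(πz/2)) dz = 4G/π, where G is Catalan's constant. -/

import Mathlib

open MeasureTheory Set Filter Real Topology

lemma hasDerivAt_arctan_sinh (x : ℝ) :
    HasDerivAt (fun y => Real.arctan (Real.sinh y)) (Real.cosh x)⁻¹ x := by
  have h := (Real.hasDerivAt_arctan (Real.sinh x)).comp x (Real.hasDerivAt_sinh x)
  refine h.congr_deriv (Eq.symm ?_)
  have hc : Real.cosh x ≠ 0 := ne_of_gt (Real.cosh_pos x)
  have h2 : 1 + Real.sinh x ^ 2 = Real.cosh x ^ 2 := by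
    rw [Real.cosh_sq]; ring
  rw [h2]
  field_simp

lemma tendsto_sinh_atTop : Tendsto Real.sinh atTop atTop := by
  apply tendsto_atTop_mono' atTop ?_ tendsto_id
  filter_upwards [eventually_gt_atTop (0:ℝ)] with x hx
  exact (Real.self_lt_sinh_iff.2 hx).le

lemma integral_sech_Ioi : ∫ x in Ioi (0:ℝ), (Real.cosh x)⁻¹ = Real.pi / 2 := by
  have h := MeasureTheory.integral_Ioi_of_hasDerivAt_of_nonneg
    (g := fun y => Real.arctan (Real.sinh y)) (g' := fun x => (Real.cosh x)⁻¹) (a := 0)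
    (l := Real.pi / 2)
    ((hasDerivAt_arctan_sinh 0).continuousAt.continuousWithinAt)
    (fun x _ => hasDerivAt_arctan_sinh x)
    (fun x _ => by positivity)
    ((Real.tendsto_arctan_atTop.mono_right nhdsWithin_le_nhds).comp tendsto_sinh_atTop)
  simpa [Real.sinh_zero, Real.arctan_zero] using h

lemma integrableOn_sech_Ioi : IntegrableOn (fun x => (Real.cosh x)⁻¹) (Ioi (0:ℝ)) := by
  exact MeasureTheory.integrableOn_Ioi_deriv_of_nonneg
    ((hasDerivAt_arctan_sinh 0).continuousAt.continuousWithinAt)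
    (fun x _ => hasDerivAt_arctan_sinh x)
    (fun x _ => by positivity)
    ((Real.tendsto_arctan_atTop.mono_right nhdsWithin_le_nhds).comp tendsto_sinh_atTop)

section xexp
variable {c : ℝ} (hc : 0 < c)

private noncomputable def Fx (c x : ℝ) : ℝ := -((x / c + 1 / c ^ 2) * Real.exp (-(c * x)))

lemma hasDerivAt_Fx (hc : 0 < c) (x : ℝ) :
    HasDerivAt (Fx c) (x * Real.exp (-(c * x))) x := by
  have h1 : HasDerivAt (fun x : ℝ => x / c + 1 / c ^ 2) (1 / c) x := by
    have := ((hasDerivAt_id x).div_const c).add_const (1 / c ^ 2)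
    simpa [one_div] using this
  have h2 : HasDerivAt (fun x : ℝ => Real.exp (-(c * x))) (-c * Real.exp (-(c * x))) x := by
    have := (((hasDerivAt_id x).const_mul c).neg).exp
    simpa [mul_comm] using this
  have h := (h1.mul h2).neg
  refine h.congr_deriv (Eq.symm ?_)
  have hc0 : c ≠ 0 := ne_of_gt hc
  field_simp
  ring

lemma tendsto_Fx (hc : 0 < c) : Tendsto (Fx c) atTop (𝓝 0) := by
  have h1 : Tendsto (fun y : ℝ => y ^ 1 * Real.exp (-y)) atTop (𝓝 0) :=
    tendsto_pow_mul_exp_neg_atTop_nhds_zero 1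
  have hcx : Tendsto (fun x : ℝ => c * x) atTop atTop :=
    Tendsto.const_mul_atTop hc tendsto_id
  have h2 : Tendsto (fun x : ℝ => (c * x) * Real.exp (-(c * x))) atTop (𝓝 0) := by
    simpa [Function.comp_def] using h1.comp hcx
  have h3 : Tendsto (fun x : ℝ => x * Real.exp (-(c * x))) atTop (𝓝 0) := by
    have := h2.const_mul (1 / c)
    simp only [mul_zero] at this
    apply this.congr
    intro x; field_simp
  have h4 : Tendsto (fun x : ℝ => Real.exp (-(c * x))) atTop (𝓝 0) :=
    Real.tendsto_exp_neg_atTop_nhds_zero.comp hcx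
  have := ((h3.const_mul (1 / c)).add (h4.const_mul (1 / c ^ 2))).neg
  simp only [mul_zero, add_zero, neg_zero] at this
  apply this.congr
  intro x; simp [Fx]; ring

lemma Fx_zero : Fx c 0 = -(1 / c ^ 2) := by simp [Fx]

lemma integral_x_exp (hc : 0 < c) :
    ∫ x in Ioi (0:ℝ), x * Real.exp (-(c * x)) = 1 / c ^ 2 := by
  have h := MeasureTheory.integral_Ioi_of_hasDerivAt_of_nonneg
    (g := Fx c) (g' := fun x => x * Real.exp (-(c * x))) (a := 0) (l := 0)
    ((hasDerivAt_Fx hc 0).continuousAt.continuousWithinAt)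
    (fun x _ => hasDerivAt_Fx hc x)
    (fun x hx => by have : (0:ℝ) < x := hx; positivity)
    (tendsto_Fx hc)
  rw [h, Fx_zero]; ring

lemma integrableOn_x_exp (hc : 0 < c) :
    IntegrableOn (fun x => x * Real.exp (-(c * x))) (Ioi (0:ℝ)) := by
  exact MeasureTheory.integrableOn_Ioi_deriv_of_nonneg
    ((hasDerivAt_Fx hc 0).continuousAt.continuousWithinAt)
    (fun x _ => hasDerivAt_Fx hc x)
    (fun x hx => by have : (0:ℝ) < x := hx; positivity)
    (tendsto_Fx hc)

end xexp


noncomputable def Fser (k : ℕ) (x : ℝ) : ℝ :=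
  (2 * (-1 : ℝ) ^ k) * (x * Real.exp (-((2 * (k : ℝ) + 1) * x)))

lemma c_pos (k : ℕ) : (0:ℝ) < 2 * (k : ℝ) + 1 := by positivity

lemma integrable_Fser (k : ℕ) : IntegrableOn (Fser k) (Ioi (0:ℝ)) :=
  (integrableOn_x_exp (c_pos k)).const_mul _

lemma integral_Fser (k : ℕ) :
    ∫ x in Ioi (0:ℝ), Fser k x = (2 * (-1 : ℝ) ^ k) * (1 / (2 * (k : ℝ) + 1) ^ 2) := by
  simp only [Fser]
  rw [MeasureTheory.integral_const_mul, integral_x_exp (c_pos k)]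

lemma integral_norm_Fser' (k : ℕ) :
    ∫ x in Ioi (0:ℝ), ‖Fser k x‖ = 2 * (1 / (2 * (k : ℝ) + 1) ^ 2) := by
  have h : ∀ x ∈ Ioi (0:ℝ), ‖Fser k x‖ = 2 * (x * Real.exp (-((2 * (k : ℝ) + 1) * x))) := by
    intro x hx
    have hx0 : (0:ℝ) < x := hx
    have he : (0:ℝ) < Real.exp (-((2 * (k : ℝ) + 1) * x)) := Real.exp_pos _
    rw [Fser, Real.norm_eq_abs, abs_mul]
    simp [abs_pow, abs_mul, abs_of_pos hx0, abs_of_pos he]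
  rw [MeasureTheory.setIntegral_congr_fun measurableSet_Ioi h,
    MeasureTheory.integral_const_mul, integral_x_exp (c_pos k)]

lemma summable_int_norm : Summable (fun k : ℕ => ∫ x in Ioi (0:ℝ), ‖Fser k x‖) := by
  have heq : (fun k : ℕ => ∫ x in Ioi (0:ℝ), ‖Fser k x‖)
      = fun k : ℕ => 2 * (1 / (2 * (k : ℝ) + 1) ^ 2) := funext integral_norm_Fser'
  rw [heq]
  have hs : Summable (fun k : ℕ => 2 * (1 / ((k : ℝ) + 1) ^ 2)) := by
    apply Summable.mul_left
    have h0 : Summable (fun n : ℕ => 1 / (n : ℝ) ^ 2) :=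
      Real.summable_one_div_nat_pow.2 (by norm_num)
    have := (summable_nat_add_iff (f := fun n : ℕ => 1 / (n : ℝ) ^ 2) 1).2 h0
    apply this.congr; intro n; push_cast; ring
  apply Summable.of_nonneg_of_le (fun k => by positivity) (fun k => ?_) hs
  apply mul_le_mul_of_nonneg_left ?_ (by norm_num : (0:ℝ) ≤ 2)
  exact one_div_le_one_div_of_le (by positivity) (by nlinarith [Nat.cast_nonneg (α := ℝ) k])

lemma tsum_Fser_eq {x : ℝ} (hx : 0 < x) :
    ∑' k : ℕ, Fser k x = x * (Real.cosh x)⁻¹ := by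
  have hlt : ‖-Real.exp (-(2 * x))‖ < 1 := by
    rw [norm_neg, Real.norm_eq_abs, abs_of_pos (Real.exp_pos _)]
    exact Real.exp_lt_one_iff.2 (by linarith)
  have hgeo : ∑' k : ℕ, (-Real.exp (-(2 * x))) ^ k = (1 + Real.exp (-(2 * x)))⁻¹ := by
    rw [tsum_geometric_of_norm_lt_one hlt]; ring_nf
  have hterm : ∀ k : ℕ, Fser k x
      = (2 * x * Real.exp (-x)) * (-Real.exp (-(2 * x))) ^ k := by
    intro k
    have h1 : (-Real.exp (-(2 * x))) ^ k = (-1 : ℝ) ^ k * Real.exp ((k : ℝ) * (-(2 * x))) := by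
      rw [show -Real.exp (-(2 * x)) = (-1) * Real.exp (-(2 * x)) by ring, mul_pow,
        ← Real.exp_nat_mul]
    rw [Fser, h1, show -((2 * (k:ℝ) + 1) * x) = (k:ℝ) * (-(2*x)) + (-x) by ring, Real.exp_add]
    ring
  rw [tsum_congr hterm, tsum_mul_left, hgeo]
  have hcosh : Real.cosh x = Real.exp x * (1 + Real.exp (-(2*x))) / 2 := by
    rw [Real.cosh_eq, show -x = x + (-(2*x)) by ring, Real.exp_add]
    ring
  have h1 : (0:ℝ) < 1 + Real.exp (-(2*x)) := by positivity
  have hee : Real.exp (-x) * Real.exp x = 1 := by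
    rw [← Real.exp_add]; simp
  rw [hcosh]
  field_simp
  linear_combination hee

lemma integral_x_sech :
    ∫ x in Ioi (0:ℝ), x * (Real.cosh x)⁻¹
      = 2 * ∑' k : ℕ, (-1 : ℝ) ^ k / (1 + 2 * (k : ℝ)) ^ 2 := by
  have key := MeasureTheory.integral_tsum_of_summable_integral_norm
    (μ := volume.restrict (Ioi (0:ℝ))) (F := Fser) integrable_Fser summable_int_norm
  have h2 : ∫ x in Ioi (0:ℝ), ∑' k : ℕ, Fser k x = ∫ x in Ioi (0:ℝ), x * (Real.cosh x)⁻¹ :=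
    MeasureTheory.setIntegral_congr_fun measurableSet_Ioi (fun x hx => tsum_Fser_eq hx)
  rw [← h2, ← key]
  rw [tsum_congr (fun k => integral_Fser k), ← tsum_mul_left]
  apply tsum_congr
  intro k
  rw [show (1 + 2 * (k:ℝ)) = (2 * (k:ℝ) + 1) by ring]
  ring

lemma integrableOn_x_sech : IntegrableOn (fun x => x * (Real.cosh x)⁻¹) (Ioi (0:ℝ)) := by
  apply Integrable.mono' ((integrableOn_x_exp one_pos).const_mul 2)
  · exact (Measurable.aestronglyMeasurable
      (measurable_id.mul ((Real.continuous_cosh.measurable).inv)))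
  · rw [ae_restrict_iff' measurableSet_Ioi]
    filter_upwards with x
    intro hx
    have hx0 : (0:ℝ) < x := hx
    have hc : Real.exp x / 2 ≤ Real.cosh x := by
      rw [Real.cosh_eq]
      have := (Real.exp_pos (-x)).le
      linarith
    have hcpos := Real.cosh_pos x
    rw [Real.norm_eq_abs, abs_of_pos (by positivity)]
    have hinv : (Real.cosh x)⁻¹ ≤ 2 * Real.exp (-x) := by
      have h2 := inv_anti₀ (by positivity : (0:ℝ) < Real.exp x / 2) hc
      calc (Real.cosh x)⁻¹ ≤ (Real.exp x / 2)⁻¹ := h2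
        _ = 2 * Real.exp (-x) := by rw [Real.exp_neg]; field_simp
    calc x * (Real.cosh x)⁻¹ ≤ x * (2 * Real.exp (-x)) :=
          mul_le_mul_of_nonneg_left hinv hx0.le
      _ = 2 * (x * Real.exp (-(1 * x))) := by rw [one_mul]; ring

noncomputable def wfun (t v : ℝ) : ℝ :=
  if 0 < v ∧ v < t then t * ((Real.cosh (t - v))⁻¹ * (Real.cosh v)⁻¹) else 0

lemma hasDerivAt_Phi (t : ℝ) (ht : 0 < t) (v : ℝ) :
    HasDerivAt (fun v => (Real.log (Real.cosh v) - Real.log (Real.cosh (t - v))) / Real.sinh t)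
      ((Real.cosh (t - v))⁻¹ * (Real.cosh v)⁻¹) v := by
  have hc1 : Real.cosh v ≠ 0 := ne_of_gt (Real.cosh_pos v)
  have hc2 : Real.cosh (t - v) ≠ 0 := ne_of_gt (Real.cosh_pos (t - v))
  have hst : Real.sinh t ≠ 0 := ne_of_gt (Real.sinh_pos_iff.2 ht)
  have h1 : HasDerivAt (fun v => Real.log (Real.cosh v)) (Real.sinh v / Real.cosh v) v :=
    (Real.hasDerivAt_cosh v).log hc1
  have hinner : HasDerivAt (fun v : ℝ => t - v) (-1) v := by
    simpa using (hasDerivAt_id v).const_sub t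
  have h2 : HasDerivAt (fun v => Real.log (Real.cosh (t - v)))
      ((Real.sinh (t - v) * (-1)) / Real.cosh (t - v)) v :=
    (((Real.hasDerivAt_cosh (t - v)).comp v hinner).log hc2)
  have h := (h1.sub h2).div_const (Real.sinh t)
  refine h.congr_deriv (Eq.symm ?_)
  have hadd : Real.sinh v * Real.cosh (t - v) + Real.sinh (t - v) * Real.cosh v = Real.sinh t := by
    rw [show t = v + (t - v) by ring, Real.sinh_add]
    ring_nf
  field_simp
  linear_combination (-1) * hadd

lemma ftc_key {t : ℝ} (ht : 0 < t) :
    ∫ v in (0:ℝ)..t, (Real.cosh (t - v))⁻¹ * (Real.cosh v)⁻¹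
      = 2 * Real.log (Real.cosh t) / Real.sinh t := by
  have hcont : Continuous (fun v => (Real.cosh (t - v))⁻¹ * (Real.cosh v)⁻¹) :=
    ((Real.continuous_cosh.comp (continuous_const.sub continuous_id)).inv₀
      (fun x => ne_of_gt (Real.cosh_pos _))).mul
      (Real.continuous_cosh.inv₀ (fun x => ne_of_gt (Real.cosh_pos _)))
  rw [intervalIntegral.integral_eq_sub_of_hasDerivAt
    (fun v _ => hasDerivAt_Phi t ht v) (hcont.intervalIntegrable 0 t)]
  simp [Real.cosh_zero, Real.log_one]
  ring

lemma integral_wfun_aux (t : ℝ) :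
    ∫ v, wfun t v = if 0 < t then 2 * t * Real.log (Real.cosh t) / Real.sinh t else 0 := by
  have hind : wfun t = Set.indicator (Ioo 0 t)
      (fun v => t * ((Real.cosh (t - v))⁻¹ * (Real.cosh v)⁻¹)) := by
    funext v
    simp [wfun, Set.indicator_apply, Set.mem_Ioo]
  rcases lt_or_ge 0 t with ht | ht
  · rw [if_pos ht, hind, MeasureTheory.integral_indicator measurableSet_Ioo,
      ← MeasureTheory.integral_Ioc_eq_integral_Ioo,
      ← intervalIntegral.integral_of_le ht.le,
      intervalIntegral.integral_const_mul, ftc_key ht]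
    ring
  · rw [if_neg (not_lt.2 ht)]
    have : ∀ v, wfun t v = 0 := by
      intro v
      rw [wfun, if_neg]
      rintro ⟨h1, h2⟩
      linarith
    simp [this]

noncomputable def hfun (t : ℝ) : ℝ :=
  if 0 < t then 2 * t * Real.log (Real.cosh t) / Real.sinh t else 0

lemma hfun_nonneg (t : ℝ) : 0 ≤ hfun t := by
  rw [hfun]
  split_ifs with ht
  · have h1 : (0:ℝ) < Real.sinh t := Real.sinh_pos_iff.2 ht
    have h2 : (0:ℝ) ≤ Real.log (Real.cosh t) := Real.log_nonneg (Real.one_le_cosh t)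
    positivity
  · exact le_refl 0

lemma hfun_le (t : ℝ) (ht : 0 < t) : hfun t ≤ 128 * Real.exp (-(1/2 * t)) := by
  have hsinh : (0:ℝ) < Real.sinh t := Real.sinh_pos_iff.2 ht
  have hlog : Real.log (Real.cosh t) ≤ t := by
    calc Real.log (Real.cosh t) ≤ Real.log (Real.exp t) := by
          apply Real.log_le_log (Real.cosh_pos t)
          rw [Real.cosh_eq]
          nlinarith [Real.exp_pos (-t), Real.exp_pos t, Real.exp_neg t,
            Real.exp_le_exp.2 (by linarith : -t ≤ t)]
      _ = t := Real.log_exp t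
  rw [hfun, if_pos ht]
  have hbase : 2 * t * Real.log (Real.cosh t) / Real.sinh t ≤ 2 * t * t / Real.sinh t := by
    gcongr
  refine hbase.trans ?_
  rcases le_or_gt t 1 with ht1 | ht1
  · have hts : t ≤ Real.sinh t := (Real.self_lt_sinh_iff.2 ht).le
    have h1 : 2 * t * t / Real.sinh t ≤ 2 * t * t / t := by
      gcongr
    have h2 : 2 * t * t / t = 2 * t := by field_simp
    have h3 : (2:ℝ) * t ≤ 2 := by linarith
    have he : Real.exp (-(1/2 * t)) ≥ Real.exp (-1 : ℝ) :=
      Real.exp_le_exp.2 (by linarith)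
    have he2 : (1:ℝ)/3 ≤ Real.exp (-1 : ℝ) := by
      have h4 : Real.exp 1 ≤ 3 := by
        have := Real.exp_one_lt_d9
        linarith
      rw [Real.exp_neg, inv_eq_one_div]
      exact one_div_le_one_div_of_le (Real.exp_pos 1) h4
    nlinarith [h1, h2, h3, he, he2]
  · have heprod : Real.exp t * Real.exp (-t) = 1 := by
      rw [← Real.exp_add]; simp
    have h2t : (2:ℝ) ≤ Real.exp t := by
      have := Real.add_one_le_exp t
      linarith
    have hS4 : Real.exp t / 4 ≤ Real.sinh t := by
      rw [Real.sinh_eq]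
      nlinarith [Real.exp_pos (-t), heprod, h2t]
    have hstep : 2 * t * t / Real.sinh t ≤ 2 * t * t / (Real.exp t / 4) := by
      gcongr
    have heq : 2 * t * t / (Real.exp t / 4) = 8 * t * t * Real.exp (-t) := by
      rw [Real.exp_neg]
      field_simp
      ring
    have hq : t * t ≤ 16 * Real.exp (t/2) := by
      have hexp : Real.exp (t/4) * Real.exp (t/4) = Real.exp (t/2) := by
        rw [← Real.exp_add]; ring_nf
      nlinarith [Real.add_one_le_exp (t/4), Real.exp_pos (t/4)]
    have hee : Real.exp (t/2) * Real.exp (-t) = Real.exp (-(1/2 * t)) := by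
      rw [← Real.exp_add]; ring_nf
    calc 2 * t * t / Real.sinh t ≤ 8 * t * t * Real.exp (-t) := hstep.trans_eq heq
      _ ≤ 8 * (16 * Real.exp (t/2)) * Real.exp (-t) := by
          have := Real.exp_pos (-t)
          nlinarith [hq]
      _ = 128 * Real.exp (-(1/2 * t)) := by
          rw [show (8:ℝ) * (16 * Real.exp (t/2)) * Real.exp (-t)
            = 128 * (Real.exp (t/2) * Real.exp (-t)) by ring, hee]

lemma integral_wfun (t : ℝ) : ∫ v, wfun t v = hfun t := by
  rw [integral_wfun_aux]; rfl

noncomputable abbrev MM : ℝ := ∫ x in Ioi (0:ℝ), x * (Real.cosh x)⁻¹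

lemma wfun_nonneg (t v : ℝ) : 0 ≤ wfun t v := by
  rw [wfun]
  split_ifs with h
  · rcases h with ⟨h1, h2⟩
    have ht : (0:ℝ) < t := h1.trans h2
    have := Real.cosh_pos (t - v)
    have := Real.cosh_pos v
    positivity
  · exact le_refl 0

lemma measurable_hfun' : Measurable hfun := by
  apply Measurable.ite measurableSet_Ioi ?_ measurable_const
  apply Measurable.div
  · exact ((measurable_const.mul measurable_id).mul
      (Real.measurable_log.comp Real.continuous_cosh.measurable))
  · exact Real.continuous_sinh.measurable

lemma integrable_hfun : Integrable hfun := by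
  have hind : hfun = Set.indicator (Ioi (0:ℝ)) hfun := by
    funext t
    rw [Set.indicator_apply]
    by_cases ht : t ∈ Ioi (0:ℝ)
    · rw [if_pos ht]
    · rw [if_neg ht, hfun, if_neg (by simpa using ht)]
  rw [hind]
  rw [integrable_indicator_iff measurableSet_Ioi]
  apply Integrable.mono' ((exp_neg_integrableOn_Ioi 0 (by norm_num : (0:ℝ) < 1/2)).const_mul 128)
  · exact measurable_hfun'.aestronglyMeasurable.restrict
  · rw [ae_restrict_iff' measurableSet_Ioi]
    filter_upwards with t ht
    rw [Real.norm_eq_abs, abs_of_nonneg (hfun_nonneg t)]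
    have := hfun_le t ht
    calc hfun t ≤ 128 * Real.exp (-(1/2 * t)) := this
      _ = 128 * Real.exp (-(1/2) * t) := by ring_nf

lemma meas_uncurry_wfun :
    AEStronglyMeasurable (Function.uncurry wfun) (volume.prod volume) := by
  have hset : MeasurableSet {p : ℝ × ℝ | 0 < p.2 ∧ p.2 < p.1} := by
    apply MeasurableSet.inter
    · exact measurableSet_lt measurable_const measurable_snd
    · exact measurableSet_lt measurable_snd measurable_fst
  have hcont : Measurable (fun p : ℝ × ℝ =>
      p.1 * ((Real.cosh (p.1 - p.2))⁻¹ * (Real.cosh p.2)⁻¹)) := by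
    apply Measurable.mul measurable_fst
    apply Measurable.mul
    · exact (Real.continuous_cosh.measurable.comp (measurable_fst.sub measurable_snd)).inv
    · exact (Real.continuous_cosh.measurable.comp measurable_snd).inv
  have heq : Function.uncurry wfun = Set.indicator {p : ℝ × ℝ | 0 < p.2 ∧ p.2 < p.1}
      (fun p => p.1 * ((Real.cosh (p.1 - p.2))⁻¹ * (Real.cosh p.2)⁻¹)) := by
    funext p
    rw [Function.uncurry, wfun, Set.indicator_apply]
    rfl
  rw [heq]
  exact (hcont.indicator hset).aestronglyMeasurable

lemma integrable_section (t : ℝ) : Integrable (fun v => wfun t v) := by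
  have hind : (fun v => wfun t v) = Set.indicator (Ioo 0 t)
      (fun v => t * ((Real.cosh (t - v))⁻¹ * (Real.cosh v)⁻¹)) := by
    funext v
    rw [wfun, Set.indicator_apply]
    rfl
  rw [hind]
  apply IntegrableOn.integrable_indicator ?_ measurableSet_Ioo
  apply IntegrableOn.mono_set ?_ Set.Ioo_subset_Icc_self
  apply Continuous.integrableOn_Icc
  exact (continuous_const.mul
    (((Real.continuous_cosh.comp (continuous_const.sub continuous_id)).inv₀
      (fun x => ne_of_gt (Real.cosh_pos _))).mul
      (Real.continuous_cosh.inv₀ (fun x => ne_of_gt (Real.cosh_pos _)))))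

lemma integrable_uncurry : Integrable (Function.uncurry wfun) (volume.prod volume) := by
  rw [MeasureTheory.integrable_prod_iff meas_uncurry_wfun]
  constructor
  · filter_upwards with t
    exact integrable_section t
  · have heq : (fun t => ∫ v, ‖Function.uncurry wfun (t, v)‖) = hfun := by
      funext t
      have h1 : (fun v => ‖Function.uncurry wfun (t, v)‖) = fun v => wfun t v := by
        funext v
        rw [Function.uncurry, Real.norm_eq_abs, abs_of_nonneg (wfun_nonneg t v)]
      rw [h1, integral_wfun]
    rw [heq]
    exact integrable_hfun

lemma integral_wfun_right (v : ℝ) :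
    ∫ t, wfun t v = if 0 < v then (MM + v * (Real.pi/2)) * (Real.cosh v)⁻¹ else 0 := by
  rcases lt_or_ge 0 v with hv | hv
  · rw [if_pos hv]
    have hind : (fun t => wfun t v) = fun t => (Set.indicator (Ioi (0:ℝ))
        (fun u => ((u + v) * (Real.cosh u)⁻¹) * (Real.cosh v)⁻¹)) (t - v) := by
      funext t
      rw [wfun, Set.indicator_apply]
      by_cases h : v < t
      · rw [if_pos ⟨hv, h⟩, if_pos (by simpa using sub_pos.2 h : t - v ∈ Ioi (0:ℝ))]
        ring_nf
      · rw [if_neg (fun hc => h hc.2), if_neg ?_]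
        simp only [Set.mem_Ioi]
        intro hc
        exact h (by linarith)
    rw [hind, MeasureTheory.integral_sub_right_eq_self
      (Set.indicator (Ioi (0:ℝ)) (fun u => ((u + v) * (Real.cosh u)⁻¹) * (Real.cosh v)⁻¹)) v,
      MeasureTheory.integral_indicator measurableSet_Ioi]
    rw [MeasureTheory.integral_mul_const]
    congr 1
    have hsplit : ∀ u ∈ Ioi (0:ℝ), (u + v) * (Real.cosh u)⁻¹
        = u * (Real.cosh u)⁻¹ + v * (Real.cosh u)⁻¹ := by
      intro u _; ring
    rw [MeasureTheory.setIntegral_congr_fun measurableSet_Ioi hsplit,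
      MeasureTheory.integral_add integrableOn_x_sech (integrableOn_sech_Ioi.const_mul v),
      MeasureTheory.integral_const_mul, integral_sech_Ioi]
  · rw [if_neg (not_lt.2 hv)]
    have : ∀ t, wfun t v = 0 := by
      intro t
      rw [wfun, if_neg (fun hc => absurd hc.1 (not_lt.2 hv))]
    simp [this]

lemma integral_hfun_eq : ∫ t, hfun t = Real.pi * MM := by
  have h1 : ∫ t, hfun t = ∫ t, ∫ v, wfun t v := by
    congr 1
    funext t
    rw [integral_wfun]
  rw [h1, MeasureTheory.integral_integral_swap integrable_uncurry]
  have h2 : (fun v => ∫ t, wfun t v)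
      = Set.indicator (Ioi (0:ℝ)) (fun v => (MM + v * (Real.pi/2)) * (Real.cosh v)⁻¹) := by
    funext v
    rw [integral_wfun_right, Set.indicator_apply]
    rfl
  rw [h2, MeasureTheory.integral_indicator measurableSet_Ioi]
  have hsplit : ∀ v ∈ Ioi (0:ℝ), (MM + v * (Real.pi/2)) * (Real.cosh v)⁻¹
      = MM * (Real.cosh v)⁻¹ + (Real.pi/2) * (v * (Real.cosh v)⁻¹) := by
    intro v _; ring
  rw [MeasureTheory.setIntegral_congr_fun measurableSet_Ioi hsplit,
    MeasureTheory.integral_add (integrableOn_sech_Ioi.const_mul MM)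
      (integrableOn_x_sech.const_mul (Real.pi/2)),
    MeasureTheory.integral_const_mul, MeasureTheory.integral_const_mul, integral_sech_Ioi]
  ring

lemma J_eq : ∫ t in Ioi (0:ℝ), t * (Real.sinh t)⁻¹ * Real.log (Real.cosh t)
    = Real.pi * MM / 2 := by
  have hind : hfun = Set.indicator (Ioi (0:ℝ))
      (fun t => 2 * (t * (Real.sinh t)⁻¹ * Real.log (Real.cosh t))) := by
    funext t
    by_cases ht : 0 < t
    · simp only [hfun, Set.indicator_apply, Set.mem_Ioi, if_pos ht]
      ring
    · simp only [hfun, Set.indicator_apply, Set.mem_Ioi, if_neg ht]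
  have h2 := integral_hfun_eq
  rw [hind, MeasureTheory.integral_indicator measurableSet_Ioi,
    MeasureTheory.integral_const_mul] at h2
  linarith [h2]

theorem convolution_first_moment :
    ∫ z in Set.Ioi (0:ℝ),
        z * (2 / (Real.exp (Real.pi * z / 2) - Real.exp (-(Real.pi * z / 2)))) *
          Real.log ((Real.exp (Real.pi * z / 2) + Real.exp (-(Real.pi * z / 2))) / 2)
      = 4 * (∑' k : ℕ, (-1 : ℝ) ^ k / (1 + 2 * (k : ℝ)) ^ 2) / Real.pi := by
  have hπ : (0:ℝ) < Real.pi := Real.pi_pos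
  have hb : (0:ℝ) < Real.pi / 2 := by positivity
  have hq : ∀ z ∈ Ioi (0:ℝ),
      z * (2 / (Real.exp (Real.pi * z / 2) - Real.exp (-(Real.pi * z / 2)))) *
          Real.log ((Real.exp (Real.pi * z / 2) + Real.exp (-(Real.pi * z / 2))) / 2)
      = (2 / Real.pi) * (Real.pi / 2 * z * (Real.sinh (Real.pi / 2 * z))⁻¹ *
          Real.log (Real.cosh (Real.pi / 2 * z))) := by
    intro z hz
    have hz0 : (0:ℝ) < z := hz
    have harg : Real.pi / 2 * z = Real.pi * z / 2 := by ring
    rw [harg, Real.sinh_eq, Real.cosh_eq]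
    have hlt : Real.exp (-(Real.pi * z / 2)) < Real.exp (Real.pi * z / 2) :=
      Real.exp_lt_exp.2 (by nlinarith)
    have hden : (0:ℝ) < Real.exp (Real.pi * z / 2) - Real.exp (-(Real.pi * z / 2)) := by
      linarith
    rw [inv_div]
    field_simp
  rw [MeasureTheory.setIntegral_congr_fun measurableSet_Ioi hq,
    MeasureTheory.integral_const_mul]
  have hcomp := MeasureTheory.integral_comp_mul_left_Ioi
    (fun t => t * (Real.sinh t)⁻¹ * Real.log (Real.cosh t)) 0 hb
  simp only [mul_zero, smul_eq_mul] at hcomp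
  rw [hcomp, J_eq]
  rw [show MM = 2 * ∑' k : ℕ, (-1 : ℝ) ^ k / (1 + 2 * (k : ℝ)) ^ 2 from integral_x_sech]
  field_simp
  ring
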